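/- arXiv:2409.11842 — 2 statements merged into one kernel-verified Lean document; each statement's English description precedes it below -/
import Mathlib

section
/- For r > 1, as n → ∞ the quantity (1/(n+2))·(1/(n+1))·(1 + (n r^{n+1}+1)/(r^{n+1}−1) − 1/(r−1)) tends to 0 but exceeds (1/n)·(1/(n+1))·(n − (n r^{n+1}+1)/(r^{n+1}−1) + 1/(r−1)) for all sufficiently large n. -/
open Filter

/-- For r > 1, the LHS of condition (BFY) for the geometric probe tends to 0 as n → ∞,
yet exceeds the RHS for all sufficiently large n. -/
theorem geometric_probe_bfy_condition (r : ℝ) (hr : 1 < r) :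
    let L : ℕ → ℝ := fun n => (1 / ((n : ℝ) + 2)) * (1 / ((n : ℝ) + 1)) *
      (1 + ((n : ℝ) * r ^ (n + 1) + 1) / (r ^ (n + 1) - 1) - 1 / (r - 1))
    let R : ℕ → ℝ := fun n => (1 / (n : ℝ)) * (1 / ((n : ℝ) + 1)) *
      ((n : ℝ) - ((n : ℝ) * r ^ (n + 1) + 1) / (r ^ (n + 1) - 1) + 1 / (r - 1))
    Tendsto L atTop (nhds 0) ∧ ∀ᶠ n : ℕ in atTop, R n < L n := by
  intro L R
  have hr0 : (0:ℝ) < r - 1 := by linarith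
  have hx : ∀ n : ℕ, 1 < r ^ (n + 1) := fun n => one_lt_pow₀ hr (Nat.succ_ne_zero n)
  -- B n := (n+1)/(r^(n+1)-1) tends to 0
  have hrinv : |1 / r| < 1 := by
    rw [abs_of_pos (by positivity)]
    rw [div_lt_one (by linarith)]; linarith
  have hu : Tendsto (fun n : ℕ => (n : ℝ) * (1 / r) ^ n) atTop (nhds 0) :=
    tendsto_self_mul_const_pow_of_abs_lt_one hrinv
  have hu' : Tendsto (fun n : ℕ => 2 * (((n + 1 : ℕ) : ℝ) * (1 / r) ^ (n + 1))) atTop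
      (nhds 0) := by
    have := (hu.comp (tendsto_add_atTop_nat 1)).const_mul 2
    simpa using this
  have hpow : Tendsto (fun n : ℕ => r ^ (n + 1)) atTop atTop :=
    (tendsto_pow_atTop_atTop_of_one_lt hr).comp (tendsto_add_atTop_nat 1)
  have hB : Tendsto (fun n : ℕ => ((n : ℝ) + 1) / (r ^ (n + 1) - 1)) atTop (nhds 0) := by
    apply squeeze_zero' (g := fun n : ℕ => 2 * (((n + 1 : ℕ) : ℝ) * (1 / r) ^ (n + 1)))
    · filter_upwards with n
      exact div_nonneg (by positivity) (by linarith [hx n])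
    · filter_upwards [hpow.eventually_ge_atTop 2] with n hn
      have hx1 : (0:ℝ) < r ^ (n + 1) - 1 := by linarith [hx n]
      have hxp : (0:ℝ) < r ^ (n + 1) := by linarith
      rw [div_le_iff₀ hx1]
      have h1 : ((n + 1 : ℕ) : ℝ) * (1 / r) ^ (n + 1) = ((n : ℝ) + 1) / r ^ (n + 1) := by
        push_cast; rw [div_pow, one_pow]; ring
      rw [h1, show 2 * (((n:ℝ) + 1) / r ^ (n + 1)) * (r ^ (n + 1) - 1)
        = 2 * ((n:ℝ) + 1) * (r ^ (n + 1) - 1) / r ^ (n + 1) by ring, le_div_iff₀ hxp]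
      nlinarith [hx n]
    · exact hu'
  have hg : Tendsto (fun n : ℕ => ((n : ℝ) + 2) * ((n : ℝ) + 1)) atTop atTop := by
    apply Tendsto.atTop_mul_atTop₀ <;>
      exact tendsto_atTop_add_const_right _ _ tendsto_natCast_atTop_atTop
  have hL : ∀ n : ℕ, L n = 1 / ((n : ℝ) + 2) +
      (((n : ℝ) + 1) / (r ^ (n + 1) - 1) - 1 / (r - 1)) / (((n : ℝ) + 2) * ((n : ℝ) + 1)) := by
    intro n
    have hx1 : r ^ (n + 1) - 1 ≠ 0 := by linarith [hx n]
    have hn1 : ((n : ℝ) + 1) ≠ 0 := by positivity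
    have hn2 : ((n : ℝ) + 2) ≠ 0 := by positivity
    show (1 / ((n : ℝ) + 2)) * (1 / ((n : ℝ) + 1)) *
      (1 + ((n : ℝ) * r ^ (n + 1) + 1) / (r ^ (n + 1) - 1) - 1 / (r - 1)) = _
    field_simp
    ring
  constructor
  · rw [show (0:ℝ) = 0 + 0 by norm_num]
    refine Tendsto.congr (fun n => (hL n).symm) (Tendsto.add ?_ ?_)
    · exact Tendsto.div_atTop tendsto_const_nhds
        (tendsto_atTop_add_const_right _ _ tendsto_natCast_atTop_atTop)
    · exact Tendsto.div_atTop (by simpa using hB.sub_const (1 / (r - 1))) hg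
  · have hev : ∀ᶠ n : ℕ in atTop, (2:ℝ) < (n : ℝ) * (r - 1) :=
      (tendsto_natCast_atTop_atTop.atTop_mul_const hr0).eventually_gt_atTop 2
    filter_upwards [hev, eventually_ge_atTop 1] with n hn2 hn1
    have hnR : (1:ℝ) ≤ (n : ℝ) := by exact_mod_cast hn1
    have hx1 : (0:ℝ) < r ^ (n + 1) - 1 := by linarith [hx n]
    rw [← sub_pos]
    have key : L n - R n =
        (((n:ℝ)+1) * (r ^ (n+1) - 1) * ((n:ℝ) * (r-1) - 2) + 2 * ((n:ℝ)+1)^2 * (r-1)) /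
          ((n:ℝ) * ((n:ℝ)+1) * ((n:ℝ)+2) * (r ^ (n+1) - 1) * (r-1)) := by
      show (1 / ((n : ℝ) + 2)) * (1 / ((n : ℝ) + 1)) *
        (1 + ((n : ℝ) * r ^ (n + 1) + 1) / (r ^ (n + 1) - 1) - 1 / (r - 1)) -
        (1 / (n : ℝ)) * (1 / ((n : ℝ) + 1)) *
        ((n : ℝ) - ((n : ℝ) * r ^ (n + 1) + 1) / (r ^ (n + 1) - 1) + 1 / (r - 1)) = _
      have h1 : (n:ℝ) ≠ 0 := by linarith
      have h2 : ((n:ℝ) + 1) ≠ 0 := by positivity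
      have h3 : ((n:ℝ) + 2) ≠ 0 := by positivity
      field_simp
      ring
    rw [key]
    apply div_pos
    · have : (0:ℝ) < (n:ℝ) * (r-1) - 2 := by linarith
      have hp1 : (0:ℝ) < ((n:ℝ)+1) * (r ^ (n+1) - 1) * ((n:ℝ) * (r-1) - 2) := by positivity
      nlinarith [sq_nonneg ((n:ℝ)+1)]
    · have h0 : (0:ℝ) < (n:ℝ) := by linarith
      positivity
end

section
/- For n = 2j and the half-Dicke probe state (a = 0), the maximal global-estimation fidelity R_n = ((n+1)/(n+2))·(n/2 + 1)/(n+1) = (n/2+1)/(n+2) converges to 1/2 as n → ∞, so the error 4(1 − R_n) converges to 2 > 0, while the inverse SLD Fisher information 1/(2n(n+2)) converges to 0 at rate n^{−2}. -/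
open Filter Asymptotics

/-- For the half-Dicke probe state (a = 0, n = 2j), the maximal global-estimation
fidelity R_n = ((n+1)/(n+2))·(n/2+1)/(n+1) = (n/2+1)/(n+2) converges to 1/2, so the
error 4(1−R_n) converges to 2 > 0, while the inverse SLD Fisher information
1/(2n(n+2)) converges to 0 at rate n^{−2}. -/
theorem half_dicke_loses_heisenberg_scaling :
    let R : ℕ → ℝ := fun n => ((n : ℝ) / 2 + 1) / ((n : ℝ) + 2)
    (∀ n : ℕ, 0 < n →
        R n = (((n : ℝ) + 1) / ((n : ℝ) + 2)) * (((n : ℝ) / 2 + 1) / ((n : ℝ) + 1)))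
    ∧ Tendsto R atTop (nhds (1 / 2))
    ∧ Tendsto (fun n : ℕ => 4 * (1 - R n)) atTop (nhds 2)
    ∧ (0 : ℝ) < 2
    ∧ Tendsto (fun n : ℕ => 1 / (2 * (n : ℝ) * ((n : ℝ) + 2))) atTop (nhds 0)
    ∧ (fun n : ℕ => 1 / (2 * (n : ℝ) * ((n : ℝ) + 2))) =O[atTop]
        fun n : ℕ => ((n : ℝ) ^ 2)⁻¹ := by
  intro R
  have hR : ∀ n : ℕ, R n = 1 / 2 := by
    intro n
    have h2 : (n : ℝ) + 2 ≠ 0 := by positivity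
    rw [show R n = ((n : ℝ) / 2 + 1) / ((n : ℝ) + 2) from rfl, div_eq_div_iff h2 (by norm_num)]
    ring
  refine ⟨?_, ?_, ?_, by norm_num, ?_, ?_⟩
  · intro n hn
    have h1 : (n : ℝ) + 1 ≠ 0 := by positivity
    have h2 : (n : ℝ) + 2 ≠ 0 := by positivity
    rw [hR]
    field_simp
  · have : R = fun _ => (1 : ℝ) / 2 := funext hR
    rw [this]
    exact tendsto_const_nhds
  · have : (fun n : ℕ => 4 * (1 - R n)) = fun _ => (2 : ℝ) := by
      funext n; rw [hR]; norm_num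
    rw [this]
    exact tendsto_const_nhds
  · have h : Tendsto (fun n : ℕ => 2 * (n : ℝ) * ((n : ℝ) + 2)) atTop atTop := by
      apply Tendsto.atTop_mul_atTop₀
      · exact tendsto_natCast_atTop_atTop.const_mul_atTop (by norm_num)
      · exact tendsto_natCast_atTop_atTop.atTop_add tendsto_const_nhds
    exact h.inv_tendsto_atTop.congr fun n => (one_div _).symm
  · apply IsBigO.of_bound 1
    filter_upwards [eventually_ge_atTop 1] with n hn
    have hn' : (1 : ℝ) ≤ (n : ℝ) := by exact_mod_cast hn
    have h1 : (0 : ℝ) < (n : ℝ) := by linarith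
    have h2 : (0 : ℝ) < 2 * (n : ℝ) * ((n : ℝ) + 2) := by positivity
    have h3 : (0 : ℝ) < (n : ℝ) ^ 2 := by positivity
    have key : 1 / (2 * (n : ℝ) * ((n : ℝ) + 2)) ≤ ((n : ℝ) ^ 2)⁻¹ := by
      rw [one_div, inv_le_inv₀ h2 h3]
      nlinarith
    rw [Real.norm_eq_abs, Real.norm_eq_abs, abs_of_nonneg (le_of_lt (by positivity)),
      abs_of_nonneg (inv_nonneg.mpr h3.le), one_mul]
    exact key
end
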